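/- Let v = (v¹, v²) : ℝ² → ℝ² be a continuously differentiable vector field with |v(x)| = o(|x|^{−1}) as |x| → ∞, such that v¹(0, x₂) = 0 for all x₂ ∈ ℝ, and such that the divergence ∂₁v¹ + ∂₂v² is Lebesgue integrable on the closed half-plane H = {(x₁,x₂) ∈ ℝ² : x₁ ≥ 0}. Then ∫_H (∂₁v¹ + ∂₂v²) dx = 0. -/

import Mathlib

open Real Filter Asymptotics MeasureTheory Topology

theorem stmt8
    (v : ℝ × ℝ → ℝ × ℝ)
    (hv : ContDiff ℝ 1 v)
    (hdecay : (fun x => ‖v x‖) =o[cocompact (ℝ × ℝ)] fun x => ‖x‖⁻¹)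
    (haxis : ∀ z : ℝ, (v (0, z)).1 = 0)
    (hint : IntegrableOn
      (fun p => fderiv ℝ (fun q => (v q).1) p (1, 0) + fderiv ℝ (fun q => (v q).2) p (0, 1))
      {p : ℝ × ℝ | 0 ≤ p.1}) :
    ∫ p in {p : ℝ × ℝ | 0 ≤ p.1},
      (fderiv ℝ (fun q => (v q).1) p (1, 0) + fderiv ℝ (fun q => (v q).2) p (0, 1)) = 0 := by
  have hf : ContDiff ℝ 1 (fun q => (v q).1) := contDiff_fst.comp hv
  have hg : ContDiff ℝ 1 (fun q => (v q).2) := contDiff_snd.comp hv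
  set F : ℝ × ℝ → ℝ :=
    fun p => fderiv ℝ (fun q => (v q).1) p (1, 0) + fderiv ℝ (fun q => (v q).2) p (0, 1)
    with hF_def
  have hFc : Continuous F := by
    apply Continuous.add
    · exact (hf.continuous_fderiv one_ne_zero).clm_apply continuous_const
    · exact (hg.continuous_fderiv one_ne_zero).clm_apply continuous_const
  set s : ℕ → Set (ℝ × ℝ) := fun n => Set.Icc ((0:ℝ), -(n:ℝ)) ((n:ℝ), (n:ℝ)) with hs_def
  have hsm : ∀ n, MeasurableSet (s n) := fun n => measurableSet_Icc
  have hmono : Monotone s := by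
    intro m n hmn
    have h : (m:ℝ) ≤ (n:ℝ) := by exact_mod_cast hmn
    apply Set.Icc_subset_Icc
    · exact ⟨le_refl _, neg_le_neg h⟩
    · exact ⟨h, h⟩
  have hunion : (⋃ n, s n) = {p : ℝ × ℝ | 0 ≤ p.1} := by
    ext p
    simp only [Set.mem_iUnion, Set.mem_Icc, Set.mem_setOf_eq, hs_def, Prod.le_def]
    constructor
    · rintro ⟨n, ⟨h1, _⟩, _⟩; exact h1
    · intro hp
      refine ⟨⌈max p.1 |p.2|⌉₊, ⟨hp, ?_⟩, ?_, ?_⟩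
      · exact neg_le_of_abs_le (le_trans (le_max_right _ _) (Nat.le_ceil _))
      · exact le_trans (le_max_left _ _) (Nat.le_ceil _)
      · exact le_of_abs_le (le_trans (le_max_right _ _) (Nat.le_ceil _))
  have hint' : IntegrableOn F (⋃ n, s n) := by rw [hunion]; exact hint
  have htend : Tendsto (fun n => ∫ p in s n, F p) atTop
      (𝓝 (∫ p in {p : ℝ × ℝ | 0 ≤ p.1}, F p)) := by
    rw [← hunion]
    exact tendsto_setIntegral_of_monotone hsm hmono hint'
  have key : ∀ n : ℕ, (∫ p in s n, F p) =
      (((∫ x in (0:ℝ)..(n:ℝ), (v (x, (n:ℝ))).2) - ∫ x in (0:ℝ)..(n:ℝ), (v (x, -(n:ℝ))).2) +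
        ∫ y in (-(n:ℝ))..(n:ℝ), (v ((n:ℝ), y)).1) := by
    intro n
    have hle : ((0:ℝ), -(n:ℝ)) ≤ ((n:ℝ), (n:ℝ)) := by
      constructor <;> simp [Nat.cast_nonneg]
    have := MeasureTheory.integral_divergence_prod_Icc_of_hasFDerivAt_off_countable_of_le
      (fun q => (v q).1) (fun q => (v q).2)
      (fun p => fderiv ℝ (fun q => (v q).1) p) (fun p => fderiv ℝ (fun q => (v q).2) p)
      ((0:ℝ), -(n:ℝ)) ((n:ℝ), (n:ℝ)) hle ∅ Set.countable_empty
      (hf.continuous.continuousOn) (hg.continuous.continuousOn)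
      (fun x _ => (hf.differentiable one_ne_zero x).hasFDerivAt)
      (fun x _ => (hg.differentiable one_ne_zero x).hasFDerivAt)
      (hFc.continuousOn.integrableOn_compact isCompact_Icc)
    rw [this]
    have hleft : (∫ y in (-(n:ℝ))..(n:ℝ), (v ((0:ℝ), y)).1) = 0 := by
      simp [haxis]
    simp only [hleft, sub_zero]
  have hzero : Tendsto (fun n => ∫ p in s n, F p) atTop (𝓝 0) := by
    rw [NormedAddCommGroup.tendsto_nhds_zero]
    intro ε hε
    have h8 : (0:ℝ) < ε/8 := by linarith
    have hev := hdecay.def h8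
    rw [← Metric.cobounded_eq_cocompact,
      (Metric.hasBasis_cobounded_compl_closedBall (0 : ℝ × ℝ)).eventually_iff] at hev
    obtain ⟨r, -, hr⟩ := hev
    have hbound : ∀ x : ℝ × ℝ, r < ‖x‖ → ‖v x‖ ≤ ε/8 * ‖x‖⁻¹ := by
      intro x hx
      have : x ∈ (Metric.closedBall (0 : ℝ × ℝ) r)ᶜ := by
        simp [Metric.mem_closedBall, dist_zero_right]
        exact hx
      have := hr this
      simpa [abs_of_nonneg (norm_nonneg _), abs_of_nonneg (inv_nonneg.2 (norm_nonneg x))] using this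
    filter_upwards [eventually_ge_atTop (⌈r⌉₊ + 1)] with n hn
    have hn1 : (1:ℝ) ≤ (n:ℝ) := by
      have : 1 ≤ n := le_trans (Nat.le_add_left 1 ⌈r⌉₊) hn
      exact_mod_cast this
    have hnpos : (0:ℝ) < (n:ℝ) := by linarith
    have hnr : r < (n:ℝ) := by
      have h1 : r ≤ (⌈r⌉₊ : ℝ) := Nat.le_ceil r
      have h2 : ((⌈r⌉₊ + 1 : ℕ) : ℝ) ≤ (n:ℝ) := by exact_mod_cast hn
      push_cast at h2
      linarith
    -- pointwise bounds on the three boundary pieces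
    have hbd : ∀ x : ℝ × ℝ, (n:ℝ) ≤ ‖x‖ → ‖v x‖ ≤ ε/8 * (n:ℝ)⁻¹ := by
      intro x hx
      have h1 := hbound x (lt_of_lt_of_le hnr hx)
      have h2 : ‖x‖⁻¹ ≤ (n:ℝ)⁻¹ := inv_anti₀ hnpos hx
      nlinarith [norm_nonneg x]
    have htop : ‖∫ x in (0:ℝ)..(n:ℝ), (v (x, (n:ℝ))).2‖ ≤ ε/8 := by
      have := intervalIntegral.norm_integral_le_of_norm_le_const
        (a := (0:ℝ)) (b := (n:ℝ)) (C := ε/8 * (n:ℝ)⁻¹)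
        (f := fun x => (v (x, (n:ℝ))).2) ?_
      · calc ‖∫ x in (0:ℝ)..(n:ℝ), (v (x, (n:ℝ))).2‖ ≤ ε/8 * (n:ℝ)⁻¹ * |(n:ℝ) - 0| := this
          _ = ε/8 := by
            rw [sub_zero, abs_of_pos hnpos]
            field_simp
      · intro x hx
        refine le_trans (norm_snd_le _) (hbd _ ?_)
        rw [Prod.norm_def]
        exact le_max_of_le_right (by simp [abs_of_pos hnpos])
    have hbot : ‖∫ x in (0:ℝ)..(n:ℝ), (v (x, -(n:ℝ))).2‖ ≤ ε/8 := by
      have := intervalIntegral.norm_integral_le_of_norm_le_const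
        (a := (0:ℝ)) (b := (n:ℝ)) (C := ε/8 * (n:ℝ)⁻¹)
        (f := fun x => (v (x, -(n:ℝ))).2) ?_
      · calc ‖∫ x in (0:ℝ)..(n:ℝ), (v (x, -(n:ℝ))).2‖ ≤ ε/8 * (n:ℝ)⁻¹ * |(n:ℝ) - 0| := this
          _ = ε/8 := by
            rw [sub_zero, abs_of_pos hnpos]
            field_simp
      · intro x hx
        refine le_trans (norm_snd_le _) (hbd _ ?_)
        rw [Prod.norm_def]
        exact le_max_of_le_right (by simp [abs_of_pos hnpos])
    have hright : ‖∫ y in (-(n:ℝ))..(n:ℝ), (v ((n:ℝ), y)).1‖ ≤ ε/4 := by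
      have := intervalIntegral.norm_integral_le_of_norm_le_const
        (a := (-(n:ℝ))) (b := (n:ℝ)) (C := ε/8 * (n:ℝ)⁻¹)
        (f := fun y => (v ((n:ℝ), y)).1) ?_
      · calc ‖∫ y in (-(n:ℝ))..(n:ℝ), (v ((n:ℝ), y)).1‖
            ≤ ε/8 * (n:ℝ)⁻¹ * |(n:ℝ) - (-(n:ℝ))| := this
          _ = ε/4 := by
            rw [sub_neg_eq_add, abs_of_pos (by linarith)]
            field_simp
            ring
      · intro y hy
        refine le_trans (norm_fst_le _) (hbd _ ?_)
        rw [Prod.norm_def]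
        exact le_max_of_le_left (by simp [abs_of_pos hnpos])
    rw [key n]
    calc ‖((∫ x in (0:ℝ)..(n:ℝ), (v (x, (n:ℝ))).2) - ∫ x in (0:ℝ)..(n:ℝ), (v (x, -(n:ℝ))).2) +
          ∫ y in (-(n:ℝ))..(n:ℝ), (v ((n:ℝ), y)).1‖
        ≤ ‖(∫ x in (0:ℝ)..(n:ℝ), (v (x, (n:ℝ))).2) - ∫ x in (0:ℝ)..(n:ℝ), (v (x, -(n:ℝ))).2‖ +
          ‖∫ y in (-(n:ℝ))..(n:ℝ), (v ((n:ℝ), y)).1‖ := norm_add_le _ _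
      _ ≤ (‖∫ x in (0:ℝ)..(n:ℝ), (v (x, (n:ℝ))).2‖ + ‖∫ x in (0:ℝ)..(n:ℝ), (v (x, -(n:ℝ))).2‖) +
          ‖∫ y in (-(n:ℝ))..(n:ℝ), (v ((n:ℝ), y)).1‖ := by
        gcongr
        exact norm_sub_le _ _
      _ ≤ (ε/8 + ε/8) + ε/4 := by gcongr
      _ < ε := by linarith
  exact tendsto_nhds_unique htend hzero
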